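/- Let S, T be bounded operators on a complex Hilbert space with S = TW for some unitary W, and let T = U − V be a proper splitting of T. Then S = UW − VW is a proper splitting of S, (UW)† = W* U†, and ρ((UW)†(VW)) = ρ(U† V); in particular one splitting converges if and only if the other does. -/

import Mathlib

open ContinuousLinearMap

/-- `Td` is the Moore–Penrose inverse of `T`. -/
def IsMoorePenroseInverse {H : Type*} [NormedAddCommGroup H] [InnerProductSpace ℂ H]
    [CompleteSpace H] (T Td : H →L[ℂ] H) : Prop :=
  T ∘L Td ∘L T = T ∧ Td ∘L T ∘L Td = Td ∧
    IsSelfAdjoint (T ∘L Td) ∧ IsSelfAdjoint (Td ∘L T)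

lemma mp_unique {H : Type*} [NormedAddCommGroup H] [InnerProductSpace ℂ H]
    [CompleteSpace H] {A B C : H →L[ℂ] H} (hB : IsMoorePenroseInverse A B)
    (hC : IsMoorePenroseInverse A C) : B = C := by
  obtain ⟨h1, h2, h3, h4⟩ := hB
  obtain ⟨g1, g2, g3, g4⟩ := hC
  simp only [IsSelfAdjoint, ← ContinuousLinearMap.mul_def] at h1 h2 h3 h4 g1 g2 g3 g4
  rw [← mul_assoc] at h1 h2 g1 g2
  have hAB : A * B = A * C := by
    calc A * B = star (A * B) := h3.symm
    _ = star B * star A := by rw [star_mul]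
    _ = star B * star (A * C * A) := by rw [g1]
    _ = star B * (star A * (star C * star A)) := by rw [star_mul, star_mul]
    _ = (star B * star A) * (star C * star A) := by noncomm_ring
    _ = star (A * B) * star (A * C) := by rw [star_mul, star_mul]
    _ = (A * B) * (A * C) := by rw [h3, g3]
    _ = (A * B * A) * C := by noncomm_ring
    _ = A * C := by rw [h1]
  have hBA : B * A = C * A := by
    calc B * A = star (B * A) := h4.symm
    _ = star A * star B := by rw [star_mul]
    _ = star (A * C * A) * star B := by rw [g1]
    _ = (star A * (star C * star A)) * star B := by rw [star_mul, star_mul]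
    _ = (star A * star C) * (star A * star B) := by noncomm_ring
    _ = star (C * A) * star (B * A) := by rw [star_mul, star_mul]
    _ = (C * A) * (B * A) := by rw [h4, g4]
    _ = C * (A * B * A) := by noncomm_ring
    _ = C * A := by rw [h1]
  calc B = B * A * B := h2.symm
  _ = B * (A * C) := by rw [mul_assoc, hAB]
  _ = (B * A) * C := by noncomm_ring
  _ = C * A * C := by rw [hBA]
  _ = C := g2

/-- If `S = TW` with `W` unitary and `T = U - V` is a proper splitting of `T`, then
`S = UW - VW` is a proper splitting of `S`, `(UW)† = W* U†`, and the spectral radii of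
the iteration operators agree. -/
theorem induced_splitting_unitary_right
    {H : Type*} [NormedAddCommGroup H] [InnerProductSpace ℂ H] [CompleteSpace H]
    (S T U V W Ud UWd : H →L[ℂ] H)
    (hTcr : IsClosed (LinearMap.range (T : H →ₗ[ℂ] H) : Set H))
    (hW1 : adjoint W ∘L W = 1) (hW2 : W ∘L adjoint W = 1)
    (hS : S = T ∘L W)
    (hsplit : T = U - V)
    (hran : LinearMap.range (U : H →ₗ[ℂ] H) = LinearMap.range (T : H →ₗ[ℂ] H))
    (hker : LinearMap.ker (U : H →ₗ[ℂ] H) = LinearMap.ker (T : H →ₗ[ℂ] H))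
    (hUd : IsMoorePenroseInverse U Ud)
    (hUWd : IsMoorePenroseInverse (U ∘L W) UWd) :
    (S = U ∘L W - V ∘L W ∧
        LinearMap.range ((U ∘L W : H →L[ℂ] H) : H →ₗ[ℂ] H) = LinearMap.range (S : H →ₗ[ℂ] H) ∧
        LinearMap.ker ((U ∘L W : H →L[ℂ] H) : H →ₗ[ℂ] H) = LinearMap.ker (S : H →ₗ[ℂ] H)) ∧
      UWd = adjoint W ∘L Ud ∧
      spectralRadius ℂ (UWd ∘L (V ∘L W)) = spectralRadius ℂ (Ud ∘L V) := by
  have hWsurj : Function.Surjective W := by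
    intro z
    exact ⟨adjoint W z, by simpa using DFunLike.congr_fun hW2 z⟩
  -- proper splitting part
  have hSsplit : S = U ∘L W - V ∘L W := by
    rw [hS, hsplit]; ext x; simp
  have hrange : ∀ A : H →L[ℂ] H, LinearMap.range ((A ∘L W : H →L[ℂ] H) : H →ₗ[ℂ] H) = LinearMap.range (A : H →ₗ[ℂ] H) := by
    intro A
    ext x
    simp only [LinearMap.mem_range, ContinuousLinearMap.coe_comp', Function.comp_apply]
    constructor
    · rintro ⟨y, rfl⟩; exact ⟨W y, rfl⟩
    · rintro ⟨y, rfl⟩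
      obtain ⟨z, rfl⟩ := hWsurj y
      exact ⟨z, rfl⟩
  have hrange' : LinearMap.range ((U ∘L W : H →L[ℂ] H) : H →ₗ[ℂ] H) = LinearMap.range (S : H →ₗ[ℂ] H) := by
    rw [hrange U, hran, hS, hrange T]
  have hker' : LinearMap.ker ((U ∘L W : H →L[ℂ] H) : H →ₗ[ℂ] H) = LinearMap.ker (S : H →ₗ[ℂ] H) := by
    ext x
    simp only [LinearMap.mem_ker, ContinuousLinearMap.coe_comp', Function.comp_apply, hS]
    constructor
    · intro h
      have hm : W x ∈ LinearMap.ker (U : H →ₗ[ℂ] H) := LinearMap.mem_ker.mpr h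
      rw [hker] at hm
      exact LinearMap.mem_ker.mp hm
    · intro h
      have hm : W x ∈ LinearMap.ker (T : H →ₗ[ℂ] H) := LinearMap.mem_ker.mpr h
      rw [← hker] at hm
      exact LinearMap.mem_ker.mp hm
  -- Moore-Penrose part
  obtain ⟨u1, u2, u3, u4⟩ := hUd
  simp only [IsSelfAdjoint, ← ContinuousLinearMap.mul_def] at u1 u2 u3 u4
  have hWW : star W * W = 1 := by
    rw [ContinuousLinearMap.star_eq_adjoint, ContinuousLinearMap.mul_def]; exact hW1
  have hWW' : W * star W = 1 := by
    rw [ContinuousLinearMap.star_eq_adjoint, ContinuousLinearMap.mul_def]; exact hW2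
  have hUWd' : IsMoorePenroseInverse (U ∘L W) (adjoint W ∘L Ud) := by
    simp only [IsMoorePenroseInverse, IsSelfAdjoint, ← ContinuousLinearMap.mul_def,
      ← ContinuousLinearMap.star_eq_adjoint]
    refine ⟨?_, ?_, ?_, ?_⟩
    · calc U * W * (star W * Ud * (U * W))
          = U * (W * star W) * ((Ud * U) * W) := by noncomm_ring
      _ = U * ((Ud * U) * W) := by rw [hWW', mul_one]
      _ = (U * (Ud * U)) * W := by noncomm_ring
      _ = U * W := by rw [u1]
    · calc star W * Ud * (U * W * (star W * Ud))
          = (star W * (Ud * U)) * (W * star W) * Ud := by noncomm_ring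
      _ = (star W * (Ud * U)) * Ud := by rw [hWW', mul_one]
      _ = star W * (Ud * (U * Ud)) := by noncomm_ring
      _ = star W * Ud := by rw [u2]
    · calc star (U * W * (star W * Ud))
          = star (star W * Ud) * star (U * W) := by rw [star_mul]
      _ = (star Ud * star (star W)) * (star W * star U) := by rw [star_mul, star_mul]
      _ = (star Ud * W) * (star W * star U) := by rw [star_star]
      _ = star Ud * (W * star W) * star U := by noncomm_ring
      _ = star Ud * star U := by rw [hWW', mul_one]
      _ = star (U * Ud) := by rw [star_mul]
      _ = U * Ud := u3
      _ = U * ((W * star W) * Ud) := by rw [hWW', one_mul]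
      _ = U * W * (star W * Ud) := by noncomm_ring
    · calc star (star W * Ud * (U * W))
          = star (U * W) * star (star W * Ud) := by rw [star_mul]
      _ = (star W * star U) * (star Ud * star (star W)) := by rw [star_mul, star_mul]
      _ = (star W * star U) * (star Ud * W) := by rw [star_star]
      _ = star W * (star U * star Ud) * W := by noncomm_ring
      _ = star W * star (Ud * U) * W := by rw [star_mul]
      _ = star W * (Ud * U) * W := by rw [u4]
      _ = star W * Ud * (U * W) := by noncomm_ring
  have hUWdeq : UWd = adjoint W ∘L Ud := mp_unique hUWd hUWd'
  refine ⟨⟨hSsplit, hrange', hker'⟩, hUWdeq, ?_⟩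
  -- spectral radius part
  set u : (H →L[ℂ] H)ˣ := ⟨adjoint W, W, hW1, hW2⟩ with hu
  have hconj : UWd ∘L (V ∘L W) = (u : H →L[ℂ] H) * (Ud ∘L V) * (↑u⁻¹ : H →L[ℂ] H) := by
    rw [hUWdeq]
    simp only [hu, Units.inv_mk, ContinuousLinearMap.mul_def]
    ext x; simp
  unfold spectralRadius
  rw [hconj, spectrum.units_conjugate]
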